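/- Let a₁, a₂, a₃ be positive real numbers and let M be the 3×3 real matrix with rows (a₂, 1, 0), (a₃, 0, 1), (a₁, 0, 0). Then M has an eigenvalue of absolute value greater than 1 if and only if a₁ + a₂ + a₃ > 1. -/

import Mathlib

theorem stmt2 (a₁ a₂ a₃ : ℝ) (h₁ : 0 < a₁) (h₂ : 0 < a₂) (h₃ : 0 < a₃) :
    (∃ lam : ℂ,
        Module.End.HasEigenvalue
          (Matrix.toLin' ((!![a₂, 1, 0; a₃, 0, 1; a₁, 0, 0] : Matrix (Fin 3) (Fin 3) ℝ).map
            Complex.ofReal)) lam ∧ 1 < ‖lam‖) ↔ 1 < a₁ + a₂ + a₃ := by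
  constructor
  · rintro ⟨lam, hev, habs⟩
    obtain ⟨v, hv⟩ := hev.exists_hasEigenvector
    have hveq : ((!![a₂, 1, 0; a₃, 0, 1; a₁, 0, 0] : Matrix (Fin 3) (Fin 3) ℝ).map
        Complex.ofReal).mulVec v = lam • v := by
      have := hv.apply_eq_smul
      rwa [Matrix.toLin'_apply] at this
    have e0 : (a₂:ℂ) * v 0 + v 1 = lam * v 0 := by
      have := congrFun hveq 0
      simpa [Matrix.mulVec, dotProduct, Fin.sum_univ_three, Matrix.map_apply] using this
    have e1 : (a₃:ℂ) * v 0 + v 2 = lam * v 1 := by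
      have := congrFun hveq 1
      simpa [Matrix.mulVec, dotProduct, Fin.sum_univ_three, Matrix.map_apply] using this
    have e2 : (a₁:ℂ) * v 0 = lam * v 2 := by
      have := congrFun hveq 2
      simpa [Matrix.mulVec, dotProduct, Fin.sum_univ_three, Matrix.map_apply] using this
    have hx : v 0 ≠ 0 := by
      intro h
      apply hv.right
      have hy : v 1 = 0 := by
        have := e0; rw [h] at this; simpa using this
      have hz : v 2 = 0 := by
        have := e1; rw [h, hy] at this; simpa using this
      funext i
      fin_cases i <;> simpa [h, hy, hz]
    have key : lam ^ 3 = (a₂:ℂ) * lam ^ 2 + (a₃:ℂ) * lam + (a₁:ℂ) := by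
      have h0 : ((a₂:ℂ) * lam ^ 2 + (a₃:ℂ) * lam + (a₁:ℂ) - lam ^ 3) * v 0 = 0 := by
        linear_combination lam ^ 2 * e0 + lam * e1 + e2
      rcases mul_eq_zero.mp h0 with h | h
      · exact (sub_eq_zero.mp h).symm
      · exact absurd h hx
    set r := ‖lam‖ with hr
    have hr0 : (0:ℝ) < r := lt_trans one_pos habs
    have hle : r ^ 3 ≤ a₂ * r ^ 2 + a₃ * r + a₁ := by
      have h1 : ‖lam ^ 3‖ = ‖(a₂:ℂ) * lam ^ 2 + (a₃:ℂ) * lam + (a₁:ℂ)‖ := by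
        rw [key]
      rw [norm_pow] at h1
      calc r ^ 3 = ‖(a₂:ℂ) * lam ^ 2 + (a₃:ℂ) * lam + (a₁:ℂ)‖ := h1
        _ ≤ ‖(a₂:ℂ) * lam ^ 2‖ + ‖(a₃:ℂ) * lam‖ + ‖(a₁:ℂ)‖ := by
            calc ‖(a₂:ℂ) * lam ^ 2 + (a₃:ℂ) * lam + (a₁:ℂ)‖
                ≤ ‖(a₂:ℂ) * lam ^ 2 + (a₃:ℂ) * lam‖ + ‖(a₁:ℂ)‖ :=
                  norm_add_le _ _
              _ ≤ _ := by gcongr; exact norm_add_le _ _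
        _ = a₂ * r ^ 2 + a₃ * r + a₁ := by
            simp [norm_mul, norm_pow, Complex.norm_real, Real.norm_eq_abs, hr, abs_of_pos h₁, abs_of_pos h₂,
              abs_of_pos h₃]
    nlinarith [mul_pos h₂ (mul_pos (mul_pos hr0 hr0) (sub_pos.mpr habs)),
      mul_pos h₃ (mul_pos hr0 (sub_pos.mpr habs)),
      mul_pos h₃ (mul_pos hr0 (mul_pos hr0 (sub_pos.mpr habs))),
      mul_pos h₁ (sub_pos.mpr habs), mul_pos hr0 hr0, pow_pos hr0 3]
  · intro hsum
    obtain ⟨t, htmem, htroot⟩ :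
        ∃ t ∈ Set.Icc (1:ℝ) (1 + a₁ + a₂ + a₃),
          (fun s : ℝ => s ^ 3 - a₂ * s ^ 2 - a₃ * s - a₁) t = 0 := by
      have hB : (1:ℝ) ≤ 1 + a₁ + a₂ + a₃ := by linarith
      have hcont : ContinuousOn (fun s : ℝ => s ^ 3 - a₂ * s ^ 2 - a₃ * s - a₁)
          (Set.Icc 1 (1 + a₁ + a₂ + a₃)) := by fun_prop
      have h0mem : (0:ℝ) ∈ Set.Icc ((fun s : ℝ => s ^ 3 - a₂ * s ^ 2 - a₃ * s - a₁) 1)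
          ((fun s : ℝ => s ^ 3 - a₂ * s ^ 2 - a₃ * s - a₁) (1 + a₁ + a₂ + a₃)) := by
        constructor
        · simp only; nlinarith
        · simp only; nlinarith [sq_nonneg (a₁ + a₂ + a₃), mul_pos h₁ h₂, mul_pos h₂ h₃,
            mul_pos h₁ h₃]
      obtain ⟨t, ht, hft⟩ := intermediate_value_Icc hB hcont h0mem
      exact ⟨t, ht, hft⟩
    simp only at htroot
    have hroot : t ^ 3 = a₂ * t ^ 2 + a₃ * t + a₁ := by linarith
    have ht1 : 1 < t := by
      rcases lt_or_eq_of_le htmem.1 with h | h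
      · exact h
      · exfalso; rw [← h] at hroot; nlinarith
    refine ⟨(t:ℂ), ?_, ?_⟩
    · apply Module.End.hasEigenvalue_of_hasEigenvector
        (x := ![(1:ℂ), (t:ℂ) - a₂, (t:ℂ) ^ 2 - a₂ * t - a₃])
      constructor
      · rw [Module.End.mem_eigenspace_iff, Matrix.toLin'_apply]
        have hrootC : (t:ℂ) ^ 3 = (a₂:ℂ) * (t:ℂ) ^ 2 + (a₃:ℂ) * t + (a₁:ℂ) := by
          exact_mod_cast congrArg (Complex.ofReal) hroot
        funext i
        fin_cases i
        · simp [Matrix.mulVec, dotProduct, Fin.sum_univ_three, Matrix.map_apply]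
        · simp [Matrix.mulVec, dotProduct, Fin.sum_univ_three, Matrix.map_apply]
          ring
        · simp [Matrix.mulVec, dotProduct, Fin.sum_univ_three, Matrix.map_apply]
          linear_combination -hrootC
      · intro h
        have := congrFun h 0
        simp at this
    · have : ‖(t:ℂ)‖ = t := by
        rw [Complex.norm_real, Real.norm_eq_abs, abs_of_pos (by linarith : (0:ℝ) < t)]
      rw [this]; exact ht1
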